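/- Let Γ ⊂ ℂ be compact, μ a complex Borel measure on Γ with μ(Γ) = 1 and F : Γ → ℂ continuous with ∫ F dμ ≠ 0, satisfying the covariance equation ∫ zⁿ conj(z)ᵐ |F|² dμ = (∫ zⁿ F dμ)(∫ conj(z)ᵐ conj(F) dμ) for all m, n ∈ ℕ. Define γ := (∫ z·F(z) dμ(z)) / (∫ F dμ). Then γ also equals (∫ z·|F(z)|² dμ(z)) / (∫ |F|² dμ), and for all continuous f : ℂ → ℂ one has ∫ f(z) |F(z)|² dμ(z) = f(γ) · ∫ |F|² dμ; in particular γ ∈ Γ and |F|²·μ = (∫ |F|² dμ)·δ_γ. -/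

import Mathlib

open MeasureTheory Complex
open scoped Classical

namespace Stmt13

open Metric Filter Bornology
open scoped Topology

variable {P : Measure ℂ} [IsFiniteMeasure P]

lemma norm_exp_le_exp_norm (w : ℂ) : ‖Complex.exp w‖ ≤ Real.exp ‖w‖ := by
  rw [Complex.norm_exp]
  exact Real.exp_le_exp.mpr ((Complex.re_le_norm w).trans le_rfl)

lemma conj_tsum (f : ℕ → ℂ) :
    (starRingEnd ℂ) (∑' k, f k) = ∑' k, (starRingEnd ℂ) (f k) := by
  simp only [starRingEnd_apply]
  exact tsum_star

lemma integrable_of_bound {f : ℂ → ℂ} {C : ℝ} (hf : AEStronglyMeasurable f P)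
    (hC : ∀ᵐ z ∂P, ‖f z‖ ≤ C) : Integrable f P :=
  ⟨hf, HasFiniteIntegral.of_bounded hC⟩

lemma integral_exp_series (g : ℂ → ℂ) (M R : ℝ) (hM : 0 ≤ M) (hR : 0 ≤ R)
    (hg : AEStronglyMeasurable g P) (hgb : ∀ᵐ z ∂P, ‖g z‖ ≤ M)
    (hzb : ∀ᵐ z ∂P, ‖z‖ ≤ R) (s : ℂ) :
    ∫ z, Complex.exp (s * z) * g z ∂P
      = ∑' j : ℕ, (s ^ j / (j.factorial : ℂ)) * ∫ z, z ^ j * g z ∂P := by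
  have hterm_meas : ∀ j : ℕ,
      AEStronglyMeasurable (fun z => (s ^ j / (j.factorial : ℂ)) * (z ^ j * g z)) P := fun j =>
    ((measurable_id.pow_const j).aestronglyMeasurable.mul hg).const_mul _
  have hptwise : ∀ z : ℂ, Complex.exp (s * z) * g z
      = ∑' j : ℕ, (s ^ j / (j.factorial : ℂ)) * (z ^ j * g z) := by
    intro z
    have : Complex.exp (s * z) = ∑' j : ℕ, (s * z) ^ j / (j.factorial : ℂ) := by
      rw [Complex.exp_eq_exp_ℂ, NormedSpace.exp_eq_tsum_div]
    rw [this, ← tsum_mul_right]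
    exact tsum_congr fun j => by rw [mul_pow]; ring
  set C : ℕ → ℝ := fun j => M * ((‖s‖ * R) ^ j / j.factorial) with hCdef
  have hCnonneg : ∀ j, 0 ≤ C j := fun j =>
    mul_nonneg hM (div_nonneg (pow_nonneg (mul_nonneg (norm_nonneg s) hR) j)
      (Nat.cast_nonneg _))
  have hCsum : Summable C := (Real.summable_pow_div_factorial (‖s‖ * R)).mul_left M
  have hbound : ∀ j : ℕ, ∀ᵐ z ∂P, ‖(s ^ j / (j.factorial : ℂ)) * (z ^ j * g z)‖ ≤ C j := by
    intro j
    filter_upwards [hgb, hzb] with z hgz hz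
    rw [norm_mul, norm_mul, norm_div, norm_pow, norm_pow]
    have h1 : ‖(j.factorial : ℂ)‖ = (j.factorial : ℝ) := by
      rw [Complex.norm_natCast]
    rw [h1]
    have h2 : ‖z‖ ^ j * ‖g z‖ ≤ R ^ j * M :=
      mul_le_mul (pow_le_pow_left₀ (norm_nonneg z) hz j) hgz (norm_nonneg _)
        (pow_nonneg hR j)
    have h3 : ‖s‖ ^ j / (j.factorial : ℝ) * (‖z‖ ^ j * ‖g z‖)
        ≤ ‖s‖ ^ j / (j.factorial : ℝ) * (R ^ j * M) :=
      mul_le_mul_of_nonneg_left h2 (div_nonneg (pow_nonneg (norm_nonneg s) j)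
        (Nat.cast_nonneg _))
    refine h3.trans (le_of_eq ?_)
    simp only [hCdef, mul_pow]; ring
  have hlint : ∀ j : ℕ, ∫⁻ z, ‖(s ^ j / (j.factorial : ℂ)) * (z ^ j * g z)‖₊ ∂P
      ≤ ENNReal.ofReal (C j) * P Set.univ := by
    intro j
    have : ∀ᵐ z ∂P, (‖(s ^ j / (j.factorial : ℂ)) * (z ^ j * g z)‖₊ : ENNReal)
        ≤ ENNReal.ofReal (C j) := by
      filter_upwards [hbound j] with z hz
      rw [← enorm_eq_nnnorm, ← ofReal_norm_eq_enorm]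
      exact ENNReal.ofReal_le_ofReal hz
    calc ∫⁻ z, ‖(s ^ j / (j.factorial : ℂ)) * (z ^ j * g z)‖₊ ∂P
        ≤ ∫⁻ _, ENNReal.ofReal (C j) ∂P := lintegral_mono_ae this
      _ = ENNReal.ofReal (C j) * P Set.univ := lintegral_const _
  have hsum : (∑' j : ℕ, ∫⁻ z, ‖(s ^ j / (j.factorial : ℂ)) * (z ^ j * g z)‖₊ ∂P) ≠ ⊤ := by
    refine ne_top_of_le_ne_top ?_ (ENNReal.tsum_le_tsum hlint)
    rw [ENNReal.tsum_mul_right, ← ENNReal.ofReal_tsum_of_nonneg hCnonneg hCsum]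
    exact ENNReal.mul_ne_top ENNReal.ofReal_ne_top (measure_ne_top P _)
  calc ∫ z, Complex.exp (s * z) * g z ∂P
      = ∫ z, ∑' j : ℕ, (s ^ j / (j.factorial : ℂ)) * (z ^ j * g z) ∂P :=
        integral_congr_ae (Eventually.of_forall hptwise)
    _ = ∑' j : ℕ, ∫ z, (s ^ j / (j.factorial : ℂ)) * (z ^ j * g z) ∂P :=
        integral_tsum hterm_meas hsum
    _ = ∑' j : ℕ, (s ^ j / (j.factorial : ℂ)) * ∫ z, z ^ j * g z ∂P :=
        tsum_congr fun j => integral_const_mul _ _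


lemma hasDerivAt_integral_exp (g : ℂ → ℂ) (M R : ℝ) (hM : 0 ≤ M) (hR : 0 ≤ R)
    (hg : AEStronglyMeasurable g P) (hgb : ∀ᵐ z ∂P, ‖g z‖ ≤ M)
    (hzb : ∀ᵐ z ∂P, ‖z‖ ≤ R) (t₀ : ℂ) :
    HasDerivAt (fun t => ∫ z, Complex.exp (t * z) * g z ∂P)
      (∫ z, Complex.exp (t₀ * z) * (z * g z) ∂P) t₀ := by
  have hexp_bound : ∀ x : ℂ, ∀ z : ℂ, ‖z‖ ≤ R → x ∈ Metric.ball t₀ 1 →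
      ‖Complex.exp (x * z)‖ ≤ Real.exp ((‖t₀‖ + 1) * R) := by
    intro x z hz hx
    rw [Complex.norm_exp]
    apply Real.exp_le_exp.mpr
    calc (x * z).re ≤ ‖x * z‖ := Complex.re_le_norm _
      _ = ‖x‖ * ‖z‖ := norm_mul _ _
      _ ≤ (‖t₀‖ + 1) * R := by
          apply mul_le_mul _ hz (norm_nonneg z) (by positivity)
          have hd : ‖x - t₀‖ < 1 := mem_ball_iff_norm.mp hx
          calc ‖x‖ = ‖t₀ + (x - t₀)‖ := by ring_nf
            _ ≤ ‖t₀‖ + ‖x - t₀‖ := norm_add_le _ _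
            _ ≤ ‖t₀‖ + 1 := by linarith
  have key := hasDerivAt_integral_of_dominated_loc_of_deriv_le (μ := P) (𝕜 := ℂ)
      (F := fun t z => Complex.exp (t * z) * g z)
      (F' := fun t z => z * (Complex.exp (t * z) * g z))
      (x₀ := t₀) (bound := fun _ => R * (Real.exp ((‖t₀‖ + 1) * R) * M)) (s := Metric.ball t₀ 1)
      (Metric.ball_mem_nhds t₀ one_pos) ?_ ?_ ?_ ?_ ?_ ?_
  · refine key.2.congr_deriv ?_
    exact integral_congr_ae (Eventually.of_forall fun z => by ring)
  · exact Eventually.of_forall fun x =>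
      ((Complex.continuous_exp.comp (continuous_const.mul continuous_id)).aestronglyMeasurable).mul hg
  · refine integrable_of_bound (C := Real.exp ((‖t₀‖ + 1) * R) * M)
      (((Complex.continuous_exp.comp (continuous_const.mul continuous_id)).aestronglyMeasurable).mul hg) ?_
    filter_upwards [hgb, hzb] with z hgz hz
    rw [norm_mul]
    exact mul_le_mul (hexp_bound t₀ z hz (mem_ball_self one_pos)) hgz (norm_nonneg _)
      (Real.exp_nonneg _)
  · exact (measurable_id.aestronglyMeasurable.mul
      (((Complex.continuous_exp.comp (continuous_const.mul continuous_id)).aestronglyMeasurable).mul hg))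
  · filter_upwards [hgb, hzb] with z hgz hz
    intro x hx
    rw [norm_mul, norm_mul]
    refine mul_le_mul hz (mul_le_mul (hexp_bound x z hz hx) hgz (norm_nonneg _)
      (Real.exp_nonneg _)) (by positivity) hR
  · exact integrable_const _
  · filter_upwards with z
    intro x _
    have h1 : HasDerivAt (fun t : ℂ => t * z) z x := by
      simpa using (hasDerivAt_id x).mul_const z
    have h2 : HasDerivAt (fun t : ℂ => Complex.exp (t * z)) (Complex.exp (x * z) * z) x :=
      h1.cexp
    have h3 := h2.mul_const (g z)
    exact h3.congr_deriv (by ring)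


lemma real_ae_zero (u : ℂ → ℝ) (hu : Integrable u P)
    (hcl : ∀ A : Set ℂ, IsClosed A → ∫ z in A, u z ∂P = 0) : u =ᵐ[P] 0 := by
  have hofReal : ∀ x : ℝ, ENNReal.ofReal x = ENNReal.ofReal (max x 0) := by
    intro x
    rcases le_total x 0 with hx | hx
    · rw [ENNReal.ofReal_of_nonpos hx, max_eq_right hx, ENNReal.ofReal_zero]
    · rw [max_eq_left hx]
  have hsplit : ∀ x : ℝ, max x 0 - max (-x) 0 = x := by
    intro x
    rcases le_total x 0 with hx | hx
    · rw [max_eq_right hx, max_eq_left (by linarith)]; ring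
    · rw [max_eq_left hx, max_eq_right (by linarith)]; ring
  have hupos : Integrable (fun z => max (u z) 0) P := hu.pos_part
  have huneg : Integrable (fun z => max (-u z) 0) P := hu.neg.pos_part
  set ν₁ := P.withDensity fun z => ENNReal.ofReal (u z) with hν₁
  set ν₂ := P.withDensity fun z => ENNReal.ofReal (-u z) with hν₂
  have key₁ : ∀ A : Set ℂ, MeasurableSet A →
      ν₁ A = ENNReal.ofReal (∫ z in A, max (u z) 0 ∂P) := by
    intro A hA
    rw [hν₁, withDensity_apply _ hA,
      ofReal_integral_eq_lintegral_ofReal hupos.integrableOn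
        (Eventually.of_forall fun z => le_max_right _ 0)]
    exact lintegral_congr fun z => hofReal (u z)
  have key₂ : ∀ A : Set ℂ, MeasurableSet A →
      ν₂ A = ENNReal.ofReal (∫ z in A, max (-u z) 0 ∂P) := by
    intro A hA
    rw [hν₂, withDensity_apply _ hA,
      ofReal_integral_eq_lintegral_ofReal huneg.integrableOn
        (Eventually.of_forall fun z => le_max_right _ 0)]
    exact lintegral_congr fun z => hofReal (-u z)
  have hposeq : ∀ A : Set ℂ, MeasurableSet A → ∫ z in A, u z ∂P = 0 →
      ∫ z in A, max (u z) 0 ∂P = ∫ z in A, max (-u z) 0 ∂P := by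
    intro A hA h0
    have : ∫ z in A, (max (u z) 0 - max (-u z) 0) ∂P = 0 := by
      rw [integral_congr_ae (Eventually.of_forall fun z => hsplit (u z))] at *
      · exact h0
    rw [integral_sub hupos.integrableOn huneg.integrableOn] at this
    linarith
  haveI : IsFiniteMeasure ν₁ := by
    constructor
    rw [key₁ Set.univ MeasurableSet.univ]
    exact ENNReal.ofReal_lt_top
  have hext : ν₁ = ν₂ := by
    refine ext_of_generate_finite {A : Set ℂ | IsClosed A}
      ((BorelSpace.measurable_eq (α := ℂ)).trans borel_eq_generateFrom_isClosed)
      (fun s hs t ht _ => hs.inter ht) ?_ ?_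
    · intro A hA
      rw [key₁ A hA.measurableSet, key₂ A hA.measurableSet,
        hposeq A hA.measurableSet (hcl A hA)]
    · rw [key₁ Set.univ MeasurableSet.univ, key₂ Set.univ MeasurableSet.univ,
        hposeq Set.univ MeasurableSet.univ (by simpa using hcl Set.univ isClosed_univ)]
  have hall : ∀ A : Set ℂ, MeasurableSet A → ∫ z in A, u z ∂P = 0 := by
    intro A hA
    have h1 := key₁ A hA
    have h2 := key₂ A hA
    rw [hext, h2] at h1
    have heq : ∫ z in A, max (u z) 0 ∂P = ∫ z in A, max (-u z) 0 ∂P := by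
      have hn1 : 0 ≤ ∫ z in A, max (u z) 0 ∂P :=
        setIntegral_nonneg hA fun z _ => le_max_right _ 0
      have hn2 : 0 ≤ ∫ z in A, max (-u z) 0 ∂P :=
        setIntegral_nonneg hA fun z _ => le_max_right _ 0
      exact ((ENNReal.ofReal_eq_ofReal_iff hn2 hn1).mp h1).symm
    have := integral_sub hupos.integrableOn huneg.integrableOn (μ := P.restrict A)
    have hcongr : ∫ z in A, u z ∂P = ∫ z in A, (max (u z) 0 - max (-u z) 0) ∂P :=
      integral_congr_ae (Eventually.of_forall fun z => (hsplit (u z)).symm)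
    rw [hcongr]
    calc ∫ z in A, (max (u z) 0 - max (-u z) 0) ∂P
        = (∫ z in A, max (u z) 0 ∂P) - ∫ z in A, max (-u z) 0 ∂P := this
      _ = 0 := by rw [heq]; ring
  exact hu.ae_eq_zero_of_forall_setIntegral_eq_zero fun s hs _ => hall s hs

lemma ae_zero_of_integral_mul_continuous (ψ : ℂ → ℂ) (hψ : Integrable ψ P)
    (H : ∀ f : ℂ → ℂ, Continuous f → ∫ z, f z * ψ z ∂P = 0) : ψ =ᵐ[P] 0 := by
  have Hclosed : ∀ A : Set ℂ, IsClosed A → ∫ z in A, ψ z ∂P = 0 := by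
    intro A hA
    rcases A.eq_empty_or_nonempty with rfl | hne
    · simp
    have hfkc : ∀ k : ℕ, Continuous fun z : ℂ => ((max (1 - k * infDist z A) 0 : ℝ) : ℂ) :=
      fun k => Complex.continuous_ofReal.comp
        ((continuous_const.sub (continuous_const.mul (continuous_infDist_pt A))).max
          continuous_const)
    have h0 : ∀ k : ℕ, ∫ z, ((max (1 - k * infDist z A) 0 : ℝ) : ℂ) * ψ z ∂P = 0 :=
      fun k => H _ (hfkc k)
    have hlim : Tendsto (fun k : ℕ => ∫ z, ((max (1 - k * infDist z A) 0 : ℝ) : ℂ) * ψ z ∂P)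
        atTop (𝓝 (∫ z, A.indicator ψ z ∂P)) := by
      refine tendsto_integral_of_dominated_convergence (fun z => ‖ψ z‖)
        (fun k => (hfkc k).aestronglyMeasurable.mul hψ.1) hψ.norm ?_ ?_
      · intro k
        filter_upwards with z
        rw [norm_mul, Complex.norm_real]
        have h1 : |max (1 - k * infDist z A) 0| ≤ 1 := by
          rw [abs_le]
          constructor
          · have := le_max_right (1 - k * infDist z A) 0; linarith
          · apply max_le _ zero_le_one
            have : (0:ℝ) ≤ k * infDist z A :=
              mul_nonneg (Nat.cast_nonneg k) infDist_nonneg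
            linarith
        calc |max (1 - k * infDist z A) 0| * ‖ψ z‖ ≤ 1 * ‖ψ z‖ :=
              mul_le_mul_of_nonneg_right h1 (norm_nonneg _)
          _ = ‖ψ z‖ := one_mul _
      · filter_upwards with z
        by_cases hz : z ∈ A
        · have heq : ∀ k : ℕ, ((max (1 - k * infDist z A) 0 : ℝ) : ℂ) * ψ z = ψ z := by
            intro k
            rw [infDist_zero_of_mem hz]
            norm_num
          rw [Set.indicator_of_mem hz]
          simp only [heq]
          exact tendsto_const_nhds
        · have hd : 0 < infDist z A := (hA.notMem_iff_infDist_pos hne).mp hz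
          rw [Set.indicator_of_notMem hz]
          have hev : ∀ᶠ k : ℕ in atTop,
              ((max (1 - k * infDist z A) 0 : ℝ) : ℂ) * ψ z = 0 := by
            obtain ⟨N, hN⟩ := exists_nat_ge (1 / infDist z A)
            filter_upwards [eventually_ge_atTop N] with k hk
            have hk' : 1 / infDist z A ≤ (k : ℝ) := hN.trans (by exact_mod_cast hk)
            have : 1 - k * infDist z A ≤ 0 := by
              rw [div_le_iff₀ hd] at hk'
              linarith
            rw [max_eq_right this]
            simp
          exact Tendsto.congr' (hev.mono fun k hk => hk.symm) tendsto_const_nhds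
    have : (∫ z, A.indicator ψ z ∂P) = 0 := by
      refine tendsto_nhds_unique hlim ?_
      simp only [h0]
      exact tendsto_const_nhds
    rwa [integral_indicator hA.measurableSet] at this
  have hre : (fun z => Complex.reCLM (ψ z)) =ᵐ[P] 0 := by
    refine real_ae_zero _ (Complex.reCLM.integrable_comp hψ) fun A hA => ?_
    rw [ContinuousLinearMap.integral_comp_comm _ hψ.integrableOn, Hclosed A hA]
    simp
  have him : (fun z => Complex.imCLM (ψ z)) =ᵐ[P] 0 := by
    refine real_ae_zero _ (Complex.imCLM.integrable_comp hψ) fun A hA => ?_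
    rw [ContinuousLinearMap.integral_comp_comm _ hψ.integrableOn, Hclosed A hA]
    simp
  filter_upwards [hre, him] with z h1 h2
  have h1' : (ψ z).re = 0 := by simpa using h1
  have h2' : (ψ z).im = 0 := by simpa using h2
  exact Complex.ext (by simpa using h1') (by simpa using h2')


lemma integral_eq_of_char (Γ' : Set ℂ) (hΓ' : IsCompact Γ') (ρ : ℂ → ℂ)
    (hρi : Integrable ρ P) (hae : ∀ᵐ z ∂P, z ∈ Γ') (γ : ℂ) (hγΓ : γ ∈ Γ') (c : ℂ)
    (hchar : ∀ t : ℂ,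
      ∫ z, Complex.exp (t * z - (starRingEnd ℂ) t * (starRingEnd ℂ) z) * ρ z ∂P
        = c * Complex.exp (t * γ - (starRingEnd ℂ) t * (starRingEnd ℂ) γ)) :
    ∀ f : ℂ → ℂ, Continuous f → ∫ z, f z * ρ z ∂P = c * f γ := by
  haveI : CompactSpace ↥Γ' := isCompact_iff_compactSpace.mp hΓ'
  set χfun : ℂ → ℂ → ℂ :=
    fun t z => Complex.exp (t * z - (starRingEnd ℂ) t * (starRingEnd ℂ) z) with hχfun
  have hχc : ∀ t, Continuous (χfun t) := fun t =>
    Complex.continuous_exp.comp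
      ((continuous_const.mul continuous_id).sub
        (continuous_const.mul Complex.continuous_conj))
  set χ : ℂ → C(↥Γ', ℂ) := fun t =>
    ⟨fun z => χfun t ↑z, (hχc t).comp continuous_subtype_val⟩ with hχ
  set Sp : Submodule ℂ C(↥Γ', ℂ) := Submodule.span ℂ (Set.range χ) with hSp
  have hone : (1 : C(↥Γ', ℂ)) ∈ Sp := by
    have h0 : χ 0 = 1 := by
      ext z
      simp [hχ, hχfun]
    rw [← h0]
    exact Submodule.subset_span (Set.mem_range_self 0)
  have hmul : ∀ x y : C(↥Γ', ℂ), x ∈ Sp → y ∈ Sp → x * y ∈ Sp := by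
    intro x y hx hy
    refine Submodule.span_induction₂ (p := fun x y _ _ => x * y ∈ Sp)
      ?_ ?_ ?_ ?_ ?_ ?_ ?_ hx hy
    · rintro _ _ ⟨s, rfl⟩ ⟨t, rfl⟩
      have : χ s * χ t = χ (s + t) := by
        ext z
        simp only [ContinuousMap.mul_apply, hχ, ContinuousMap.coe_mk, hχfun]
        rw [← Complex.exp_add]
        congr 1
        simp only [map_add]
        ring
      rw [this]
      exact Submodule.subset_span (Set.mem_range_self _)
    · intro y _; rw [zero_mul]; exact Sp.zero_mem
    · intro x _; rw [mul_zero]; exact Sp.zero_mem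
    · intro x y z _ _ _ h1 h2; rw [add_mul]; exact Sp.add_mem h1 h2
    · intro x y z _ _ _ h1 h2; rw [mul_add]; exact Sp.add_mem h1 h2
    · intro r x y _ _ h1; rw [smul_mul_assoc]; exact Sp.smul_mem r h1
    · intro r x y _ _ h1; rw [mul_smul_comm]; exact Sp.smul_mem r h1
  have hstar : ∀ x : C(↥Γ', ℂ), x ∈ Sp → star x ∈ Sp := by
    intro x hx
    refine Submodule.span_induction (p := fun x _ => star x ∈ Sp) ?_ ?_ ?_ ?_ hx
    · rintro _ ⟨t, rfl⟩
      have : star (χ t) = χ (-t) := by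
        ext z
        simp only [ContinuousMap.star_apply, hχ, ContinuousMap.coe_mk, hχfun]
        rw [RCLike.star_def, ← Complex.exp_conj]
        congr 1
        simp only [map_sub, map_mul, Complex.conj_conj, map_neg]
        ring
      rw [this]
      exact Submodule.subset_span (Set.mem_range_self _)
    · show star (0 : C(↥Γ', ℂ)) ∈ Sp
      rw [star_zero]; exact Sp.zero_mem
    · intro a b _ _ h1 h2; rw [star_add]; exact Sp.add_mem h1 h2
    · intro a b _ h1; rw [star_smul]; exact Sp.smul_mem _ h1
  set S : StarSubalgebra ℂ C(↥Γ', ℂ) :=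
    { toSubalgebra := Sp.toSubalgebra hone hmul
      star_mem' := fun {a} ha => hstar a ha } with hS
  have hsep : S.SeparatesPoints := by
    intro x y hxy
    set d : ℂ := (x : ℂ) - (y : ℂ) with hd
    have hdne : d ≠ 0 := sub_ne_zero.mpr (fun hc => hxy (Subtype.ext hc))
    have hnsq : Complex.normSq d ≠ 0 := by
      simpa using hdne
    set t : ℂ := ((Real.pi / (2 * Complex.normSq d) : ℝ) : ℂ) * Complex.I * (starRingEnd ℂ) d
      with ht
    have htd : t * d = ((Real.pi / 2 : ℝ) : ℂ) * Complex.I := by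
      rw [ht]
      have : (starRingEnd ℂ) d * d = (Complex.normSq d : ℂ) := by
        rw [mul_comm, Complex.mul_conj]
      calc ((Real.pi / (2 * Complex.normSq d) : ℝ) : ℂ) * Complex.I * (starRingEnd ℂ) d * d
          = ((Real.pi / (2 * Complex.normSq d) : ℝ) : ℂ) * (Complex.normSq d : ℂ) * Complex.I := by
            rw [mul_assoc _ _ d, this]; ring
        _ = ((Real.pi / 2 : ℝ) : ℂ) * Complex.I := by
            congr 1
            rw [← Complex.ofReal_mul]
            congr 1
            field_simp
    have hD : (t * x - (starRingEnd ℂ) t * (starRingEnd ℂ) (x : ℂ))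
        - (t * y - (starRingEnd ℂ) t * (starRingEnd ℂ) (y : ℂ))
        = (Real.pi : ℂ) * Complex.I := by
      have h1 : (t * x - (starRingEnd ℂ) t * (starRingEnd ℂ) (x : ℂ))
          - (t * y - (starRingEnd ℂ) t * (starRingEnd ℂ) (y : ℂ))
          = t * d - (starRingEnd ℂ) (t * d) := by
        simp only [hd, map_sub, map_mul]
        ring
      rw [h1, htd]
      simp only [map_mul, Complex.conj_ofReal, Complex.conj_I]
      push_cast
      ring
    refine ⟨⇑(χ t), ⟨χ t, Submodule.subset_span (Set.mem_range_self t), rfl⟩, ?_⟩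
    show χfun t (x : ℂ) ≠ χfun t (y : ℂ)
    intro hcontra
    simp only [hχfun] at hcontra
    have hb : (t * x - (starRingEnd ℂ) t * (starRingEnd ℂ) (x : ℂ))
        = (t * y - (starRingEnd ℂ) t * (starRingEnd ℂ) (y : ℂ)) + (Real.pi : ℂ) * Complex.I := by
      rw [← hD]; ring
    rw [hb, Complex.exp_add, Complex.exp_pi_mul_I] at hcontra
    have hne := Complex.exp_ne_zero (t * y - (starRingEnd ℂ) t * (starRingEnd ℂ) (y : ℂ))
    have hcon2 : Complex.exp (t * y - (starRingEnd ℂ) t * (starRingEnd ℂ) (y : ℂ)) * (-1)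
        = Complex.exp (t * y - (starRingEnd ℂ) t * (starRingEnd ℂ) (y : ℂ)) * 1 := by
      rw [mul_one]; exact hcontra
    have : (-1 : ℂ) = 1 := mul_left_cancel₀ hne hcon2
    norm_num at this
  have hSW := ContinuousMap.starSubalgebra_topologicalClosure_eq_top_of_separatesPoints S hsep
  -- the evaluation functional
  set qext : C(↥Γ', ℂ) → ℂ → ℂ :=
    fun q z => if hz : z ∈ Γ' then q ⟨z, hz⟩ else 0 with hqext
  have hrestr : P.restrict Γ' = P := Measure.restrict_eq_self_of_ae_mem hae
  have hqm : ∀ q : C(↥Γ', ℂ), AEStronglyMeasurable (qext q) P := by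
    intro q
    have hcont : ContinuousOn (qext q) Γ' := by
      rw [continuousOn_iff_continuous_restrict]
      have : Γ'.domRestrict (qext q) = fun z : ↥Γ' => q z := by
        funext z
        show qext q z = q z
        simp only [Set.restrict_apply, hqext]
        rw [dif_pos z.2]
      rw [this]
      exact q.continuous
    have h2 := (ContinuousOn.aemeasurable (μ := P) hcont
      hΓ'.isClosed.measurableSet).aestronglyMeasurable
    rwa [hrestr] at h2
  have hqb : ∀ (q : C(↥Γ', ℂ)) (z : ℂ), ‖qext q z‖ ≤ ‖q‖ := by
    intro q z
    simp only [hqext]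
    by_cases hz : z ∈ Γ'
    · rw [dif_pos hz]; exact q.norm_coe_le_norm ⟨z, hz⟩
    · rw [dif_neg hz]; simpa using norm_nonneg q
  have hqint : ∀ q : C(↥Γ', ℂ), Integrable (fun z => qext q z * ρ z) P := fun q =>
    hρi.bdd_mul (hqm q) (Eventually.of_forall (hqb q))
  set I : C(↥Γ', ℂ) → ℂ := fun q => ∫ z, qext q z * ρ z ∂P with hI
  set γ' : ↥Γ' := ⟨γ, hγΓ⟩ with hγ'
  have hqsub : ∀ q₁ q₂ : C(↥Γ', ℂ), ∀ z, qext (q₁ - q₂) z = qext q₁ z - qext q₂ z := by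
    intro q₁ q₂ z
    simp only [hqext]
    by_cases hz : z ∈ Γ'
    · rw [dif_pos hz, dif_pos hz, dif_pos hz]; simp
    · rw [dif_neg hz, dif_neg hz, dif_neg hz]; simp
  have hIsub : ∀ q₁ q₂ : C(↥Γ', ℂ), I q₁ - I q₂ = I (q₁ - q₂) := by
    intro q₁ q₂
    show (∫ z, qext q₁ z * ρ z ∂P) - (∫ z, qext q₂ z * ρ z ∂P)
      = ∫ z, qext (q₁ - q₂) z * ρ z ∂P
    rw [← integral_sub (hqint q₁) (hqint q₂)]
    refine integral_congr_ae (Eventually.of_forall fun z => ?_)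
    simp only [hqsub q₁ q₂]
    ring
  have hInorm : ∀ q : C(↥Γ', ℂ), ‖I q‖ ≤ ‖q‖ * ∫ z, ‖ρ z‖ ∂P := by
    intro q
    refine (norm_integral_le_integral_norm _).trans ?_
    rw [← integral_const_mul]
    refine integral_mono (hqint q).norm (hρi.norm.const_mul _) fun z => ?_
    rw [norm_mul]
    exact mul_le_mul_of_nonneg_right (hqb q z) (norm_nonneg _)
  have hgen : ∀ t : ℂ, I (χ t) = c * (χ t) γ' := by
    intro t
    have hcongr : (fun z => qext (χ t) z * ρ z) =ᵐ[P] fun z => χfun t z * ρ z := by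
      filter_upwards [hae] with z hz
      simp only [hqext]
      rw [dif_pos hz]
      rfl
    show (∫ z, qext (χ t) z * ρ z ∂P) = c * (χ t) γ'
    rw [integral_congr_ae hcongr]
    exact hchar t
  have hspan : ∀ q : C(↥Γ', ℂ), q ∈ Sp → I q = c * q γ' := by
    intro q hq
    refine Submodule.span_induction (p := fun q _ => I q = c * q γ') ?_ ?_ ?_ ?_ hq
    · rintro _ ⟨t, rfl⟩
      exact hgen t
    · show I 0 = c * (0 : C(↥Γ', ℂ)) γ'
      have : ∀ z, qext (0 : C(↥Γ', ℂ)) z = 0 := by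
        intro z
        simp only [hqext]
        by_cases hz : z ∈ Γ'
        · rw [dif_pos hz]; simp
        · rw [dif_neg hz]
      show (∫ z, qext (0 : C(↥Γ', ℂ)) z * ρ z ∂P) = c * (0 : C(↥Γ', ℂ)) γ'
      rw [integral_congr_ae (Eventually.of_forall fun z => by rw [this z, zero_mul])]
      simp
    · intro q₁ q₂ _ _ h1 h2
      show I (q₁ + q₂) = c * (q₁ + q₂) γ'
      have hadd : ∀ z, qext (q₁ + q₂) z = qext q₁ z + qext q₂ z := by
        intro z
        simp only [hqext]
        by_cases hz : z ∈ Γ'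
        · rw [dif_pos hz, dif_pos hz, dif_pos hz]; simp
        · rw [dif_neg hz, dif_neg hz, dif_neg hz]; simp
      have : I (q₁ + q₂) = I q₁ + I q₂ := by
        show (∫ z, qext (q₁ + q₂) z * ρ z ∂P)
          = (∫ z, qext q₁ z * ρ z ∂P) + ∫ z, qext q₂ z * ρ z ∂P
        rw [← integral_add (hqint q₁) (hqint q₂)]
        refine integral_congr_ae (Eventually.of_forall fun z => ?_)
        simp only [hadd]
        ring
      rw [this, h1, h2]
      simp only [ContinuousMap.add_apply]
      ring
    · intro a q₁ _ h1
      show I (a • q₁) = c * (a • q₁) γ'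
      have hsmul : ∀ z, qext (a • q₁) z = a * qext q₁ z := by
        intro z
        simp only [hqext]
        by_cases hz : z ∈ Γ'
        · rw [dif_pos hz, dif_pos hz]; simp [ContinuousMap.smul_apply, smul_eq_mul]
        · rw [dif_neg hz, dif_neg hz]; simp
      have : I (a • q₁) = a * I q₁ := by
        show (∫ z, qext (a • q₁) z * ρ z ∂P) = a * ∫ z, qext q₁ z * ρ z ∂P
        rw [← integral_const_mul]
        refine integral_congr_ae (Eventually.of_forall fun z => ?_)
        simp only [hsmul]
        ring
      rw [this, h1]
      simp only [ContinuousMap.smul_apply, smul_eq_mul]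
      ring
  intro f hf
  set fc : C(↥Γ', ℂ) := ⟨fun z => f ↑z, hf.comp continuous_subtype_val⟩ with hfc
  have hfccl : fc ∈ closure (S : Set C(↥Γ', ℂ)) := by
    have h1 : fc ∈ S.topologicalClosure := by
      rw [hSW]
      exact StarSubalgebra.mem_top
    exact h1
  have hkey : I fc = c * fc γ' := by
    set X : ℂ := I fc - c * fc γ' with hX
    have hXbound : ∀ ε : ℝ, 0 < ε → ‖X‖ ≤ ε * ((∫ z, ‖ρ z‖ ∂P) + ‖c‖) := by
      intro ε hε
      obtain ⟨q, hqS, hqd⟩ := Metric.mem_closure_iff.mp hfccl ε hε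
      have hqSp : q ∈ Sp := hqS
      have hnd : ‖fc - q‖ < ε := by
        rw [← dist_eq_norm]
        exact hqd
      have hXeq : X = I (fc - q) + c * (q γ' - fc γ') := by
        rw [hX, ← hIsub fc q, hspan q hqSp]
        ring
      rw [hXeq]
      have h1 : ‖I (fc - q)‖ ≤ ε * ∫ z, ‖ρ z‖ ∂P := by
        refine (hInorm _).trans ?_
        refine mul_le_mul_of_nonneg_right hnd.le ?_
        exact integral_nonneg fun z => norm_nonneg _
      have h2 : ‖c * (q γ' - fc γ')‖ ≤ ‖c‖ * ε := by
        rw [norm_mul]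
        refine mul_le_mul_of_nonneg_left ?_ (norm_nonneg c)
        calc ‖q γ' - fc γ'‖ = ‖(fc - q) γ'‖ := by
              rw [ContinuousMap.sub_apply, norm_sub_rev]
          _ ≤ ‖fc - q‖ := (fc - q).norm_coe_le_norm γ'
          _ ≤ ε := hnd.le
      calc ‖I (fc - q) + c * (q γ' - fc γ')‖
          ≤ ‖I (fc - q)‖ + ‖c * (q γ' - fc γ')‖ := norm_add_le _ _
        _ ≤ ε * ∫ z, ‖ρ z‖ ∂P + ‖c‖ * ε := add_le_add h1 h2
        _ = ε * ((∫ z, ‖ρ z‖ ∂P) + ‖c‖) := by ring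
    have hX0 : X = 0 := by
      by_contra hne
      have hpos : 0 < ‖X‖ := norm_pos_iff.mpr hne
      set K : ℝ := (∫ z, ‖ρ z‖ ∂P) + ‖c‖ with hK
      have hKnn : 0 ≤ K := add_nonneg (integral_nonneg fun z => norm_nonneg _) (norm_nonneg c)
      have hKpos : (0:ℝ) < K + 1 := by linarith
      have := hXbound (‖X‖ / (K + 1)) (div_pos hpos hKpos)
      rw [div_mul_eq_mul_div] at this
      have h2 : ‖X‖ * K / (K + 1) < ‖X‖ := by
        rw [div_lt_iff₀ hKpos]
        nlinarith
      linarith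
    have := sub_eq_zero.mp hX0
    exact this
  have hfin : ∫ z, f z * ρ z ∂P = I fc := by
    show _ = ∫ z, qext fc z * ρ z ∂P
    refine integral_congr_ae ?_
    filter_upwards [hae] with z hz
    simp only [hqext]
    rw [dif_pos hz]
    rfl
  rw [hfin, hkey]
  rfl


end Stmt13

open Stmt13 Metric Filter Bornology in
/-- Under the covariance equation with `∫ F dμ ≠ 0`, the point
`γ = (∫ z F dμ)/(∫ F dμ)` also equals `(∫ z |F|² dμ)/(∫ |F|² dμ)`, belongs to
`Γ`, and the measure `|F|²·μ` equals `(∫ |F|² dμ)·δ_γ`; in particular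
`∫ f |F|² dμ = f(γ)·∫ |F|² dμ` for every continuous `f`. -/
theorem stmt_13 (Γ : Set ℂ) (hΓ : IsCompact Γ)
    (P : Measure ℂ) [IsFiniteMeasure P] (h : ℂ → ℂ)
    (hmeas : Measurable h) (hnorm : ∀ z, ‖h z‖ = 1)
    (hsupp : P Γᶜ = 0)
    (hmass : ∫ z, h z ∂P = 1)
    (F : ℂ → ℂ) (hF : ContinuousOn F Γ)
    (hFint : ∫ z, F z * h z ∂P ≠ 0)
    (hcov : ∀ m n : ℕ,
      ∫ z, z ^ n * (starRingEnd ℂ) z ^ m * ((‖F z‖ ^ 2 : ℝ) : ℂ) * h z ∂P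
        = (∫ z, z ^ n * F z * h z ∂P) *
            ∫ z, (starRingEnd ℂ) z ^ m * (starRingEnd ℂ) (F z) * h z ∂P)
    (γ : ℂ) (hγ : γ = (∫ z, z * F z * h z ∂P) / (∫ z, F z * h z ∂P)) :
    γ = (∫ z, z * ((‖F z‖ ^ 2 : ℝ) : ℂ) * h z ∂P) /
          (∫ z, ((‖F z‖ ^ 2 : ℝ) : ℂ) * h z ∂P) ∧
      (∀ f : ℂ → ℂ, Continuous f →
        ∫ z, f z * ((‖F z‖ ^ 2 : ℝ) : ℂ) * h z ∂P
          = f γ * ∫ z, ((‖F z‖ ^ 2 : ℝ) : ℂ) * h z ∂P) ∧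
      γ ∈ Γ ∧
      (∀ A : Set ℂ, MeasurableSet A →
        ∫ z in A, ((‖F z‖ ^ 2 : ℝ) : ℂ) * h z ∂P
          = if γ ∈ A then ∫ z, ((‖F z‖ ^ 2 : ℝ) : ℂ) * h z ∂P else 0) := by
  classical
  -- ρ is the density |F|² h
  set ρ : ℂ → ℂ := fun z => ((‖F z‖ ^ 2 : ℝ) : ℂ) * h z with hρdef
  -- a.e. membership in Γ
  have haeΓ : ∀ᵐ z ∂P, z ∈ Γ := by
    rw [MeasureTheory.ae_iff]
    simpa [Set.compl_def] using hsupp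
  have hPne : P ≠ 0 := by
    intro h0
    rw [h0] at hFint
    simp at hFint
  have hΓne : Γ.Nonempty := by
    rcases Set.eq_empty_or_nonempty Γ with hΓe | hne
    · exfalso
      apply hPne
      apply MeasureTheory.Measure.measure_univ_eq_zero.mp
      rw [← Set.compl_empty, ← hΓe]
      exact hsupp
    · exact hne
  -- bounds
  obtain ⟨R₀, hR₀⟩ := hΓ.isBounded.exists_norm_le
  set R : ℝ := max R₀ 0 with hRdef
  have hR : 0 ≤ R := le_max_right _ _
  have hzb : ∀ᵐ z ∂P, ‖z‖ ≤ R := by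
    filter_upwards [haeΓ] with z hz
    exact (hR₀ z hz).trans (le_max_left _ _)
  obtain ⟨M₀, hM₀⟩ := hΓ.exists_bound_of_continuousOn hF
  set M : ℝ := max M₀ 0 with hMdef
  have hM : 0 ≤ M := le_max_right _ _
  have hFb : ∀ᵐ z ∂P, ‖F z‖ ≤ M := by
    filter_upwards [haeΓ] with z hz
    exact (hM₀ z hz).trans (le_max_left _ _)
  -- measurability
  have hFm : AEStronglyMeasurable F P := by
    have hrestr : P.restrict Γ = P := Measure.restrict_eq_self_of_ae_mem haeΓ
    have h2 := (ContinuousOn.aemeasurable (μ := P) hF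
      hΓ.isClosed.measurableSet).aestronglyMeasurable
    rwa [hrestr] at h2
  have hconjh : Measurable fun z => (starRingEnd ℂ) (h z) :=
    Complex.continuous_conj.measurable.comp hmeas
  have hρm : AEStronglyMeasurable ρ P := by
    rw [hρdef]
    exact ((Complex.measurable_ofReal.comp_aemeasurable
      (hFm.norm.aemeasurable.pow_const 2)).mul hmeas.aemeasurable).aestronglyMeasurable
  have hρnorm : ∀ᵐ z ∂P, ‖ρ z‖ = ‖F z‖ ^ 2 := by
    filter_upwards with z
    rw [hρdef]
    simp only [norm_mul, hnorm z, mul_one, Complex.norm_real]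
    exact abs_of_nonneg (pow_nonneg (norm_nonneg _) 2)
  have hρb : ∀ᵐ z ∂P, ‖ρ z‖ ≤ M ^ 2 := by
    filter_upwards [hρnorm, hFb] with z h1 h2
    rw [h1]
    exact pow_le_pow_left₀ (norm_nonneg _) h2 2
  have hρint : Integrable ρ P := integrable_of_bound hρm hρb
  -- the basic families
  set g1 : ℕ → ℂ → ℂ := fun n z => z ^ n * F z * h z with hg1def
  set g2 : ℕ → ℂ → ℂ := fun m z => z ^ m * F z * (starRingEnd ℂ) (h z) with hg2def
  have hg1m : ∀ n, AEStronglyMeasurable (g1 n) P := fun n =>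
    ((measurable_id.pow_const n).aemeasurable.aestronglyMeasurable.mul hFm).mul
      hmeas.aestronglyMeasurable
  have hg2m : ∀ m, AEStronglyMeasurable (g2 m) P := fun m =>
    ((measurable_id.pow_const m).aemeasurable.aestronglyMeasurable.mul hFm).mul
      hconjh.aestronglyMeasurable
  have hg1b : ∀ n, ∀ᵐ z ∂P, ‖g1 n z‖ ≤ R ^ n * M := by
    intro n
    filter_upwards [hzb, hFb] with z h1 h2
    rw [hg1def]
    simp only [norm_mul, hnorm z, mul_one, norm_pow]
    exact mul_le_mul (pow_le_pow_left₀ (norm_nonneg _) h1 n) h2 (norm_nonneg _)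
      (pow_nonneg hR n)
  have hg2b : ∀ m, ∀ᵐ z ∂P, ‖g2 m z‖ ≤ R ^ m * M := by
    intro m
    filter_upwards [hzb, hFb] with z h1 h2
    rw [hg2def]
    simp only [norm_mul, RCLike.norm_conj, hnorm z, mul_one, norm_pow]
    exact mul_le_mul (pow_le_pow_left₀ (norm_nonneg _) h1 m) h2 (norm_nonneg _)
      (pow_nonneg hR m)
  -- moments
  set A : ℕ → ℂ := fun n => ∫ z, z ^ n * F z * h z ∂P with hAdef
  set B : ℕ → ℂ := fun m =>
    ∫ z, (starRingEnd ℂ) z ^ m * (starRingEnd ℂ) (F z) * h z ∂P with hBdef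
  have hmom : ∀ Mi Ni : ℕ,
      ∫ z, z ^ Ni * (starRingEnd ℂ) z ^ Mi * ρ z ∂P = A Ni * B Mi := by
    intro Mi Ni
    have h1 : ∫ z, z ^ Ni * (starRingEnd ℂ) z ^ Mi * ρ z ∂P
        = ∫ z, z ^ Ni * (starRingEnd ℂ) z ^ Mi * ((‖F z‖ ^ 2 : ℝ) : ℂ) * h z ∂P := by
      refine integral_congr_ae (Eventually.of_forall fun z => ?_)
      rw [hρdef]
      ring
    rw [h1]
    exact hcov Mi Ni
  have hconjB : ∀ N : ℕ, ∫ z, z ^ N * F z * (starRingEnd ℂ) (h z) ∂P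
      = (starRingEnd ℂ) (B N) := by
    intro N
    rw [hBdef]
    simp only
    rw [← integral_conj]
    refine integral_congr_ae (Eventually.of_forall fun z => ?_)
    simp only [map_mul, map_pow, Complex.conj_conj]
  -- generating functions
  set E : ℕ → ℂ → ℂ := fun n t => ∫ z, Complex.exp (t * z) * g1 n z ∂P with hEdef
  set K : ℕ → ℂ → ℂ := fun m t => ∫ z, Complex.exp (-t * z) * g2 m z ∂P with hKdef
  have hE_series : ∀ n t, E n t
      = ∑' j : ℕ, (t ^ j / (j.factorial : ℂ)) * A (n + j) := by
    intro n t
    rw [hEdef]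
    simp only
    rw [integral_exp_series (g1 n) (R ^ n * M) R
      (mul_nonneg (pow_nonneg hR n) hM) hR (hg1m n) (hg1b n) hzb t]
    refine tsum_congr fun j => ?_
    congr 1
    rw [hAdef]
    simp only
    refine integral_congr_ae (Eventually.of_forall fun z => ?_)
    rw [hg1def]
    simp only
    ring
  have hK_series : ∀ m t, K m t
      = ∑' k : ℕ, ((-t) ^ k / (k.factorial : ℂ)) * (starRingEnd ℂ) (B (m + k)) := by
    intro m t
    rw [hKdef]
    simp only
    rw [integral_exp_series (g2 m) (R ^ m * M) R
      (mul_nonneg (pow_nonneg hR m) hM) hR (hg2m m) (hg2b m) hzb (-t)]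
    refine tsum_congr fun k => ?_
    congr 1
    rw [← hconjB (m + k)]
    refine integral_congr_ae (Eventually.of_forall fun z => ?_)
    rw [hg2def]
    simp only
    ring

  -- the key two-sided identity Ψ
  have hΨ : ∀ (n m : ℕ) (t : ℂ),
      ∫ z, Complex.exp (t * z - (starRingEnd ℂ) t * (starRingEnd ℂ) z)
          * (z ^ n * (starRingEnd ℂ) z ^ m * ρ z) ∂P
        = E n t * (starRingEnd ℂ) (K m t) := by
    intro n m t
    have hsplit : ∀ z : ℂ,
        Complex.exp (t * z - (starRingEnd ℂ) t * (starRingEnd ℂ) z)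
            * (z ^ n * (starRingEnd ℂ) z ^ m * ρ z)
        = Complex.exp (t * z) * (Complex.exp (-((starRingEnd ℂ) t * (starRingEnd ℂ) z))
            * (z ^ n * (starRingEnd ℂ) z ^ m * ρ z)) := by
      intro z
      rw [sub_eq_add_neg, Complex.exp_add]
      ring
    rw [integral_congr_ae (Eventually.of_forall hsplit)]
    -- measurability and bound for the inner function
    have hWm : AEStronglyMeasurable
        (fun z => Complex.exp (-((starRingEnd ℂ) t * (starRingEnd ℂ) z))
          * (z ^ n * (starRingEnd ℂ) z ^ m * ρ z)) P := by
      refine AEStronglyMeasurable.mul ?_ ?_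
      · exact (Complex.continuous_exp.comp
          ((continuous_const.mul Complex.continuous_conj).neg)).aestronglyMeasurable
      · exact ((measurable_id.pow_const n).aemeasurable.aestronglyMeasurable.mul
          ((Complex.continuous_conj.measurable.pow_const m).aestronglyMeasurable)).mul hρm
    have hWb : ∀ᵐ z ∂P, ‖Complex.exp (-((starRingEnd ℂ) t * (starRingEnd ℂ) z))
        * (z ^ n * (starRingEnd ℂ) z ^ m * ρ z)‖
        ≤ Real.exp (‖t‖ * R) * (R ^ n * (R ^ m * M ^ 2)) := by
      filter_upwards [hzb, hρb, hρnorm] with z h1 h2 _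
      rw [norm_mul]
      refine mul_le_mul ?_ ?_ (norm_nonneg _) (Real.exp_nonneg _)
      · refine (Stmt13.norm_exp_le_exp_norm _).trans ?_
        apply Real.exp_le_exp.mpr
        rw [norm_neg, norm_mul, RCLike.norm_conj, RCLike.norm_conj]
        exact mul_le_mul_of_nonneg_left h1 (norm_nonneg t)
      · rw [norm_mul, norm_mul, norm_pow, norm_pow, RCLike.norm_conj]
        have e1 : ‖z‖ ^ n ≤ R ^ n := pow_le_pow_left₀ (norm_nonneg _) h1 n
        have e2 : ‖z‖ ^ m ≤ R ^ m := pow_le_pow_left₀ (norm_nonneg _) h1 m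
        calc ‖z‖ ^ n * ‖z‖ ^ m * ‖ρ z‖ ≤ R ^ n * R ^ m * M ^ 2 := by
              refine mul_le_mul (mul_le_mul e1 e2 (pow_nonneg (norm_nonneg _) m)
                (pow_nonneg hR n)) h2 (norm_nonneg _) ?_
              exact mul_nonneg (pow_nonneg hR n) (pow_nonneg hR m)
          _ = R ^ n * (R ^ m * M ^ 2) := by ring
    rw [integral_exp_series _ (Real.exp (‖t‖ * R) * (R ^ n * (R ^ m * M ^ 2))) R
      (mul_nonneg (Real.exp_nonneg _)
        (mul_nonneg (pow_nonneg hR n) (mul_nonneg (pow_nonneg hR m) (pow_nonneg hM 2))))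
      hR hWm hWb hzb t]
    have hinner : ∀ j : ℕ,
        (∫ z, z ^ j * (Complex.exp (-((starRingEnd ℂ) t * (starRingEnd ℂ) z))
          * (z ^ n * (starRingEnd ℂ) z ^ m * ρ z)) ∂P)
        = A (n + j) * (starRingEnd ℂ) (K m t) := by
      intro j
      have hcw : ∀ z : ℂ, z ^ j * (Complex.exp (-((starRingEnd ℂ) t * (starRingEnd ℂ) z))
            * (z ^ n * (starRingEnd ℂ) z ^ m * ρ z))
          = (starRingEnd ℂ) (Complex.exp (-t * z)
            * (z ^ m * (starRingEnd ℂ) z ^ (n + j) * (starRingEnd ℂ) (ρ z))) := by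
        intro z
        simp only [map_mul, map_pow, map_neg, Complex.conj_conj, ← Complex.exp_conj]
        rw [pow_add]
        ring
      rw [integral_congr_ae (Eventually.of_forall hcw), integral_conj]
      have hW2m : AEStronglyMeasurable
          (fun z => z ^ m * (starRingEnd ℂ) z ^ (n + j) * (starRingEnd ℂ) (ρ z)) P := by
        refine AEStronglyMeasurable.mul (AEStronglyMeasurable.mul ?_ ?_) ?_
        · exact (measurable_id.pow_const m).aestronglyMeasurable
        · exact (Complex.continuous_conj.measurable.pow_const (n + j)).aestronglyMeasurable
        · exact (Complex.continuous_conj.measurable.comp_aemeasurable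
            hρm.aemeasurable).aestronglyMeasurable
      have hW2b : ∀ᵐ z ∂P,
          ‖z ^ m * (starRingEnd ℂ) z ^ (n + j) * (starRingEnd ℂ) (ρ z)‖
          ≤ R ^ m * (R ^ (n + j) * M ^ 2) := by
        filter_upwards [hzb, hρb] with z h1 h2
        rw [norm_mul, norm_mul, norm_pow, norm_pow, RCLike.norm_conj, RCLike.norm_conj]
        have e1 : ‖z‖ ^ m ≤ R ^ m := pow_le_pow_left₀ (norm_nonneg _) h1 m
        have e2 : ‖z‖ ^ (n + j) ≤ R ^ (n + j) := pow_le_pow_left₀ (norm_nonneg _) h1 (n + j)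
        calc ‖z‖ ^ m * ‖z‖ ^ (n + j) * ‖ρ z‖ ≤ R ^ m * R ^ (n + j) * M ^ 2 := by
              refine mul_le_mul (mul_le_mul e1 e2 (pow_nonneg (norm_nonneg _) _)
                (pow_nonneg hR m)) h2 (norm_nonneg _) ?_
              exact mul_nonneg (pow_nonneg hR m) (pow_nonneg hR (n + j))
          _ = R ^ m * (R ^ (n + j) * M ^ 2) := by ring
      rw [integral_exp_series _ (R ^ m * (R ^ (n + j) * M ^ 2)) R
        (mul_nonneg (pow_nonneg hR m)
          (mul_nonneg (pow_nonneg hR (n + j)) (pow_nonneg hM 2)))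
        hR hW2m hW2b hzb (-t)]
      have hmom2 : ∀ k : ℕ,
          (∫ z, z ^ k * (z ^ m * (starRingEnd ℂ) z ^ (n + j) * (starRingEnd ℂ) (ρ z)) ∂P)
          = (starRingEnd ℂ) (A (n + j) * B (m + k)) := by
        intro k
        rw [← hmom (m + k) (n + j), ← integral_conj]
        refine integral_congr_ae (Eventually.of_forall fun z => ?_)
        simp only [map_mul, map_pow, Complex.conj_conj]
        rw [pow_add, pow_add]
        ring
      have hstep : (∑' k : ℕ, ((-t) ^ k / (k.factorial : ℂ))
            * ∫ z, z ^ k * (z ^ m * (starRingEnd ℂ) z ^ (n + j)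
              * (starRingEnd ℂ) (ρ z)) ∂P)
          = ∑' k : ℕ, ((-t) ^ k / (k.factorial : ℂ))
            * (starRingEnd ℂ) (A (n + j) * B (m + k)) := by
        exact tsum_congr fun k => by rw [hmom2 k]
      rw [hstep, Complex.conj_tsum]
      have hKconj : (starRingEnd ℂ) (K m t)
          = ∑' k : ℕ, ((-(starRingEnd ℂ) t) ^ k / (k.factorial : ℂ)) * B (m + k) := by
        rw [hK_series m t, Complex.conj_tsum]
        refine tsum_congr fun k => ?_
        simp only [map_mul, map_div₀, map_pow, map_neg, Complex.conj_conj, map_natCast]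
      rw [hKconj, ← tsum_mul_left]
      refine tsum_congr fun k => ?_
      simp only [map_mul, map_div₀, map_pow, map_neg, Complex.conj_conj, map_natCast]
      ring
    have hstep2 : (∑' j : ℕ, (t ^ j / (j.factorial : ℂ))
          * ∫ z, z ^ j * (Complex.exp (-((starRingEnd ℂ) t * (starRingEnd ℂ) z))
            * (z ^ n * (starRingEnd ℂ) z ^ m * ρ z)) ∂P)
        = ∑' j : ℕ, (t ^ j / (j.factorial : ℂ)) * (A (n + j) * (starRingEnd ℂ) (K m t)) :=
      tsum_congr fun j => by rw [hinner j]
    rw [hstep2, hE_series n t, ← tsum_mul_right]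
    refine tsum_congr fun j => ?_
    ring
  -- boundedness of E * K
  have hΨbound : ∀ (n m : ℕ) (t : ℂ),
      ‖E n t * K m t‖ ≤ R ^ n * (R ^ m * M ^ 2) * (P Set.univ).toReal := by
    intro n m t
    have h1 : ‖E n t * K m t‖ = ‖E n t * (starRingEnd ℂ) (K m t)‖ := by
      rw [norm_mul, norm_mul, RCLike.norm_conj]
    rw [h1, ← hΨ n m t]
    refine norm_integral_le_of_norm_le_const ?_
    filter_upwards [hzb, hρb] with z h2 h3
    have hexp1 : ‖Complex.exp (t * z - (starRingEnd ℂ) t * (starRingEnd ℂ) z)‖ = 1 := by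
      rw [Complex.norm_exp]
      have : (t * z - (starRingEnd ℂ) t * (starRingEnd ℂ) z).re = 0 := by
        rw [← map_mul, Complex.sub_re, Complex.conj_re, sub_self]
      rw [this, Real.exp_zero]
    rw [norm_mul, hexp1, one_mul, norm_mul, norm_mul, norm_pow, norm_pow, RCLike.norm_conj]
    have e1 : ‖z‖ ^ n ≤ R ^ n := pow_le_pow_left₀ (norm_nonneg _) h2 n
    have e2 : ‖z‖ ^ m ≤ R ^ m := pow_le_pow_left₀ (norm_nonneg _) h2 m
    calc ‖z‖ ^ n * ‖z‖ ^ m * ‖ρ z‖ ≤ R ^ n * R ^ m * M ^ 2 := by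
          refine mul_le_mul (mul_le_mul e1 e2 (pow_nonneg (norm_nonneg _) _)
            (pow_nonneg hR n)) h3 (norm_nonneg _) ?_
          exact mul_nonneg (pow_nonneg hR n) (pow_nonneg hR m)
      _ = R ^ n * (R ^ m * M ^ 2) := by ring
  -- derivatives
  have hE_deriv : ∀ (n : ℕ) (t : ℂ), HasDerivAt (E n) (E (n + 1) t) t := by
    intro n t
    have h1 := hasDerivAt_integral_exp (g1 n) (R ^ n * M) R
      (mul_nonneg (pow_nonneg hR n) hM) hR (hg1m n) (hg1b n) hzb t
    have h2 : (∫ z, Complex.exp (t * z) * (z * g1 n z) ∂P) = E (n + 1) t := by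
      rw [hEdef]
      simp only
      refine integral_congr_ae (Eventually.of_forall fun z => ?_)
      rw [hg1def]
      simp only
      ring
    rw [h2] at h1
    exact h1
  have hK_deriv : ∀ (m : ℕ) (t : ℂ), HasDerivAt (K m) (-(K (m + 1) t)) t := by
    intro m t
    have h1 := hasDerivAt_integral_exp (g2 m) (R ^ m * M) R
      (mul_nonneg (pow_nonneg hR m) hM) hR (hg2m m) (hg2b m) hzb (-t)
    have hneg : HasDerivAt (fun t : ℂ => -t) (-1) t := (hasDerivAt_id t).neg
    have h2 := HasDerivAt.comp t h1 hneg
    have h3 : (∫ z, Complex.exp (-t * z) * (z * g2 m z) ∂P) = K (m + 1) t := by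
      rw [hKdef]
      simp only
      refine integral_congr_ae (Eventually.of_forall fun z => ?_)
      rw [hg2def]
      simp only
      ring
    have h4 : (∫ z, Complex.exp (-t * z) * (z * g2 m z) ∂P) * (-1) = -(K (m + 1) t) := by
      rw [h3]; ring
    rw [h4] at h2
    exact h2
  -- Liouville: the products are constant
  have hE00 : ∀ n, E n 0 = A n := by
    intro n
    rw [hEdef, hAdef]
    simp only
    refine integral_congr_ae (Eventually.of_forall fun z => ?_)
    rw [hg1def]
    simp only [zero_mul, Complex.exp_zero, one_mul]
  have hK00 : ∀ m, K m 0 = (starRingEnd ℂ) (B m) := by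
    intro m
    rw [hKdef]
    simp only
    rw [← hconjB m]
    refine integral_congr_ae (Eventually.of_forall fun z => ?_)
    rw [hg2def]
    simp only [neg_zero, zero_mul, Complex.exp_zero, one_mul]
  have hconst : ∀ (n m : ℕ) (t : ℂ), E n t * K m t = A n * (starRingEnd ℂ) (B m) := by
    intro n m t
    have hdiff : Differentiable ℂ fun t => E n t * K m t := fun s =>
      ((hE_deriv n s).differentiableAt.mul (hK_deriv m s).differentiableAt)
    have hbd : Bornology.IsBounded (Set.range fun t => E n t * K m t) := by
      rw [isBounded_iff_forall_norm_le]
      refine ⟨R ^ n * (R ^ m * M ^ 2) * (P Set.univ).toReal, ?_⟩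
      rintro x ⟨s, rfl⟩
      exact hΨbound n m s
    have := hdiff.apply_eq_apply_of_bounded hbd t 0
    rw [this, hE00 n, hK00 m]
  -- A 0 is the nonzero integral of F h
  have hA0eq : A 0 = ∫ z, F z * h z ∂P := by
    rw [hAdef]
    exact integral_congr_ae (Eventually.of_forall fun z => by simp)
  have hA0ne : A 0 ≠ 0 := by rw [hA0eq]; exact hFint
  have hch0 : ∀ t : ℂ,
      (∫ z, Complex.exp (t * z - (starRingEnd ℂ) t * (starRingEnd ℂ) z) * ρ z ∂P)
        = E 0 t * (starRingEnd ℂ) (K 0 t) := by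
    intro t
    rw [← hΨ 0 0 t]
    exact integral_congr_ae (Eventually.of_forall fun z => by simp)
  -- some B m is nonzero
  have hBex : ∃ m, B m ≠ 0 := by
    by_contra hno
    push_neg at hno
    have hK0 : ∀ t, K 0 t = 0 := by
      intro t
      rw [hK_series 0 t]
      have hz0 : ∀ k : ℕ, ((-t) ^ k / (k.factorial : ℂ)) * (starRingEnd ℂ) (B (0 + k)) = 0 := by
        intro k; rw [hno (0 + k), map_zero, mul_zero]
      rw [tsum_congr hz0, tsum_zero]
    have hCONT0 := integral_eq_of_char Γ hΓ ρ hρint haeΓ hΓne.choose hΓne.choose_spec 0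
      (fun t => by rw [hch0 t, hK0 t, map_zero, mul_zero, zero_mul])
    have hρ0 : ρ =ᵐ[P] 0 := by
      refine ae_zero_of_integral_mul_continuous ρ hρint fun f hf => ?_
      rw [hCONT0 f hf, zero_mul]
    have hFh0 : (fun z => F z * h z) =ᵐ[P] 0 := by
      filter_upwards [hρ0, hρnorm] with z h1 h2
      have h3 : ‖F z‖ ^ 2 = 0 := by
        rw [← h2]
        rw [show ρ z = 0 from h1]
        simp
      have h4 : F z = 0 := norm_eq_zero.mp ((pow_eq_zero_iff (two_ne_zero)).mp h3)
      show F z * h z = 0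
      rw [h4, zero_mul]
    exact hFint (integral_eq_zero_of_ae hFh0)
  obtain ⟨ms, hms⟩ := hBex
  have hEKne : ∀ t, E 0 t ≠ 0 ∧ K ms t ≠ 0 := by
    intro t
    have h1 := hconst 0 ms t
    have h2 : A 0 * (starRingEnd ℂ) (B ms) ≠ 0 := by
      refine mul_ne_zero hA0ne fun hc => hms ?_
      have := congrArg (starRingEnd ℂ) hc
      simpa using this
    rw [← h1] at h2
    exact mul_ne_zero_iff.mp h2
  have hA1eq : A 1 = ∫ z, z * F z * h z ∂P := by
    rw [hAdef]
    exact integral_congr_ae (Eventually.of_forall fun z => by simp)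
  have hγA : γ = A 1 / A 0 := by rw [hγ, ← hA1eq, ← hA0eq]
  have hE1γ : ∀ t, E 1 t = γ * E 0 t := by
    intro t
    have h1 := hconst 1 ms t
    have h0 := hconst 0 ms t
    have hcross : (A 0 * E 1 t) * K ms t = (A 1 * E 0 t) * K ms t := by
      calc (A 0 * E 1 t) * K ms t = A 0 * (E 1 t * K ms t) := by ring
        _ = A 0 * (A 1 * (starRingEnd ℂ) (B ms)) := by rw [h1]
        _ = A 1 * (A 0 * (starRingEnd ℂ) (B ms)) := by ring
        _ = A 1 * (E 0 t * K ms t) := by rw [h0]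
        _ = (A 1 * E 0 t) * K ms t := by ring
    have hlin := mul_right_cancel₀ (hEKne t).2 hcross
    rw [hγA, div_mul_eq_mul_div, eq_div_iff hA0ne]
    linear_combination hlin
  have hexpderiv : ∀ t : ℂ, HasDerivAt (fun s => Complex.exp (-(γ * s)))
      (Complex.exp (-(γ * t)) * -γ) t := by
    intro t
    have h1 : HasDerivAt (fun s : ℂ => -(γ * s)) (-γ) t := by
      exact ((hasDerivAt_id t).const_mul γ).neg.congr_deriv (by ring)
    exact h1.cexp
  have hE0exp : ∀ t, E 0 t = A 0 * Complex.exp (γ * t) := by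
    have hW : ∀ t : ℂ, HasDerivAt (fun s => E 0 s * Complex.exp (-(γ * s))) 0 t := by
      intro t
      have h2 := (hE_deriv 0 t).mul (hexpderiv t)
      refine h2.congr_deriv ?_
      rw [show (0:ℕ) + 1 = 1 from rfl, hE1γ t]
      ring
    have hWconst : ∀ t : ℂ, E 0 t * Complex.exp (-(γ * t)) = A 0 := by
      intro t
      have hWdiff : Differentiable ℂ fun s => E 0 s * Complex.exp (-(γ * s)) :=
        fun s => (hW s).differentiableAt
      have hfd : ∀ s : ℂ, fderiv ℂ (fun s => E 0 s * Complex.exp (-(γ * s))) s = 0 := by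
        intro s
        have h2 := (hW s).hasFDerivAt.fderiv
        rw [h2]
        ext y
        simp
      have h5 := is_const_of_fderiv_eq_zero (𝕜 := ℂ) hWdiff hfd t 0
      simpa [hE00 0] using h5
    intro t
    have h3 : Complex.exp (-(γ * t)) * Complex.exp (γ * t) = 1 := by
      rw [← Complex.exp_add]; simp
    calc E 0 t = E 0 t * (Complex.exp (-(γ * t)) * Complex.exp (γ * t)) := by
          rw [h3, mul_one]
      _ = (E 0 t * Complex.exp (-(γ * t))) * Complex.exp (γ * t) := by ring
      _ = A 0 * Complex.exp (γ * t) := by rw [hWconst t]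
  have hKexp : ∀ m t, K m t = (starRingEnd ℂ) (B m) * Complex.exp (-(γ * t)) := by
    intro m t
    have h0 := hconst 0 m t
    rw [hE0exp t] at h0
    have hne : A 0 * Complex.exp (γ * t) ≠ 0 := mul_ne_zero hA0ne (Complex.exp_ne_zero _)
    have h2 : (A 0 * Complex.exp (γ * t))
        * ((starRingEnd ℂ) (B m) * Complex.exp (-(γ * t)))
        = A 0 * (starRingEnd ℂ) (B m) := by
      have h3 : Complex.exp (γ * t) * Complex.exp (-(γ * t)) = 1 := by
        rw [← Complex.exp_add]; simp
      calc (A 0 * Complex.exp (γ * t))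
          * ((starRingEnd ℂ) (B m) * Complex.exp (-(γ * t)))
          = (A 0 * (starRingEnd ℂ) (B m))
            * (Complex.exp (γ * t) * Complex.exp (-(γ * t))) := by ring
        _ = A 0 * (starRingEnd ℂ) (B m) := by rw [h3, mul_one]
    exact mul_left_cancel₀ hne (h0.trans h2.symm)
  have hBrec : ∀ m, B (m + 1) = (starRingEnd ℂ) γ * B m := by
    intro m
    have h1 := hK_deriv m 0
    have hfun : K m = fun t => (starRingEnd ℂ) (B m) * Complex.exp (-(γ * t)) :=
      funext fun t => hKexp m t
    rw [hfun] at h1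
    have h2 : HasDerivAt (fun t => (starRingEnd ℂ) (B m) * Complex.exp (-(γ * t)))
        ((starRingEnd ℂ) (B m) * (Complex.exp (-(γ * 0)) * -γ)) 0 :=
      (hexpderiv 0).const_mul _
    have h3 := h1.unique h2
    rw [hKexp (m + 1) 0] at h3
    simp only [mul_zero, neg_zero, Complex.exp_zero, mul_one] at h3
    have h4 : (starRingEnd ℂ) (B (m + 1)) = γ * (starRingEnd ℂ) (B m) := by
      linear_combination -h3
    have h6 := congrArg (starRingEnd ℂ) h4
    simpa [map_mul] using h6
  have hBgeom : ∀ m, B m = (starRingEnd ℂ) γ ^ m * B 0 := by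
    intro m
    induction m with
    | zero => simp
    | succ k ih => rw [hBrec k, ih, pow_succ]; ring
  have hB0ne : B 0 ≠ 0 := by
    intro h0
    apply hms
    rw [hBgeom ms, h0, mul_zero]
  have hcne : A 0 * B 0 ≠ 0 := mul_ne_zero hA0ne hB0ne
  -- the characteristic identity
  have hchar : ∀ t : ℂ,
      ∫ z, Complex.exp (t * z - (starRingEnd ℂ) t * (starRingEnd ℂ) z) * ρ z ∂P
        = (A 0 * B 0) * Complex.exp (t * γ - (starRingEnd ℂ) t * (starRingEnd ℂ) γ) := by
    intro t
    rw [hch0 t, hE0exp t, hKexp 0 t]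
    have e1 : (starRingEnd ℂ) ((starRingEnd ℂ) (B 0) * Complex.exp (-(γ * t)))
        = B 0 * Complex.exp (-((starRingEnd ℂ) γ * (starRingEnd ℂ) t)) := by
      rw [map_mul, Complex.conj_conj, ← Complex.exp_conj]
      congr 2
      simp only [map_neg, map_mul]
    rw [e1]
    calc A 0 * Complex.exp (γ * t)
        * (B 0 * Complex.exp (-((starRingEnd ℂ) γ * (starRingEnd ℂ) t)))
        = (A 0 * B 0) * (Complex.exp (γ * t)
          * Complex.exp (-((starRingEnd ℂ) γ * (starRingEnd ℂ) t))) := by ring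
      _ = (A 0 * B 0) * Complex.exp (t * γ - (starRingEnd ℂ) t * (starRingEnd ℂ) γ) := by
          rw [← Complex.exp_add]
          congr 2
          ring
  -- the main continuous-function identity
  have hCONT := integral_eq_of_char (Γ ∪ {γ}) (hΓ.union isCompact_singleton) ρ hρint
    (haeΓ.mono fun z hz => Set.mem_union_left _ hz) γ (Set.mem_union_right _ rfl)
    (A 0 * B 0) hchar
  have hcval : (∫ z, ρ z ∂P) = A 0 * B 0 := by
    rw [← hmom 0 0]
    exact integral_congr_ae (Eventually.of_forall fun z => by simp)
  -- conclusion (2)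
  have hgoal2 : ∀ f : ℂ → ℂ, Continuous f →
      ∫ z, f z * ((‖F z‖ ^ 2 : ℝ) : ℂ) * h z ∂P
        = f γ * ∫ z, ((‖F z‖ ^ 2 : ℝ) : ℂ) * h z ∂P := by
    intro f hf
    have h1 : ∫ z, f z * ((‖F z‖ ^ 2 : ℝ) : ℂ) * h z ∂P = ∫ z, f z * ρ z ∂P :=
      integral_congr_ae (Eventually.of_forall fun z => by rw [hρdef]; ring)
    have h2 : (∫ z, ((‖F z‖ ^ 2 : ℝ) : ℂ) * h z ∂P) = A 0 * B 0 := hcval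
    rw [h1, hCONT f hf, h2]
    ring
  -- conclusion (3)
  have hγΓ : γ ∈ Γ := by
    by_contra hγn
    have hd₀ : 0 < infDist γ Γ := (hΓ.isClosed.notMem_iff_infDist_pos hΓne).mp hγn
    set f₀ : ℂ → ℂ := fun z => ((max (1 - dist z γ / infDist γ Γ) 0 : ℝ) : ℂ) with hf₀
    have hf₀c : Continuous f₀ := by
      apply Complex.continuous_ofReal.comp
      exact (continuous_const.sub
        ((continuous_id.dist continuous_const).div_const _)).max continuous_const
    have h1 := hCONT f₀ hf₀c
    have h2 : ∫ z, f₀ z * ρ z ∂P = 0 := by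
      refine integral_eq_zero_of_ae ?_
      filter_upwards [haeΓ] with z hz
      have h3 : infDist γ Γ ≤ dist z γ := by
        rw [dist_comm]
        exact infDist_le_dist_of_mem hz
      have h4 : 1 - dist z γ / infDist γ Γ ≤ 0 := by
        rw [sub_nonpos, le_div_iff₀ hd₀]
        linarith
      show f₀ z * ρ z = 0
      rw [hf₀]
      simp only
      rw [max_eq_right h4]
      simp
    rw [h2] at h1
    have h5 : f₀ γ = 1 := by
      rw [hf₀]
      simp only [dist_self, zero_div, sub_zero]
      norm_num
    rw [h5, mul_one] at h1
    exact hcne h1.symm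
  -- conclusion (4)
  have hψae : (fun z => (z - γ) * ρ z) =ᵐ[P] 0 := by
    have hψint : Integrable (fun z => (z - γ) * ρ z) P := by
      refine integrable_of_bound (C := (R + ‖γ‖) * M ^ 2)
        (((measurable_id.sub_const γ).aestronglyMeasurable).mul hρm) ?_
      filter_upwards [hzb, hρb] with z h1 h2
      rw [norm_mul]
      refine mul_le_mul ?_ h2 (norm_nonneg _) (by positivity)
      exact (norm_sub_le _ _).trans (add_le_add h1 le_rfl)
    refine ae_zero_of_integral_mul_continuous _ hψint fun f hf => ?_
    have h1 : ∫ z, f z * ((z - γ) * ρ z) ∂P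
        = ∫ z, (fun w => (w - γ) * f w) z * ρ z ∂P :=
      integral_congr_ae (Eventually.of_forall fun z => by ring)
    rw [h1, hCONT (fun w => (w - γ) * f w)
      (((continuous_id.sub continuous_const) : Continuous fun w : ℂ => w - γ).mul hf)]
    simp
  have hρind : ρ =ᵐ[P] fun z => ({γ} : Set ℂ).indicator ρ z := by
    filter_upwards [hψae] with z h1
    have h1' : (z - γ) * ρ z = 0 := h1
    by_cases hz : z = γ
    · rw [hz, Set.indicator_of_mem (Set.mem_singleton γ)]
    · rcases mul_eq_zero.mp h1' with h3 | h3
      · exact absurd (sub_eq_zero.mp h3) hz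
      · rw [h3, Set.indicator_of_notMem (by simpa using hz)]
  have hgoal4 : ∀ A' : Set ℂ, MeasurableSet A' →
      (∫ z in A', ρ z ∂P) = if γ ∈ A' then ∫ z, ρ z ∂P else 0 := by
    intro A' hA'
    have hsing : MeasurableSet ({γ} : Set ℂ) := measurableSet_singleton γ
    have hAint : (∫ z in A', ρ z ∂P) = ∫ z in A' ∩ {γ}, ρ z ∂P := by
      rw [integral_congr_ae (ae_restrict_of_ae hρind), setIntegral_indicator hsing]
    have hUint : (∫ z, ρ z ∂P) = ∫ z in ({γ} : Set ℂ), ρ z ∂P := by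
      rw [integral_congr_ae hρind, integral_indicator hsing]
    by_cases hγA : γ ∈ A'
    · rw [if_pos hγA, hAint, hUint]
      rw [Set.inter_eq_self_of_subset_right (Set.singleton_subset_iff.mpr hγA)]
    · rw [if_neg hγA, hAint]
      rw [Set.inter_singleton_eq_empty.mpr hγA]
      simp
  -- conclusion (1)
  have hgoal1 : γ = (∫ z, z * ((‖F z‖ ^ 2 : ℝ) : ℂ) * h z ∂P)
      / ∫ z, ((‖F z‖ ^ 2 : ℝ) : ℂ) * h z ∂P := by
    have hnum : (∫ z, z * ((‖F z‖ ^ 2 : ℝ) : ℂ) * h z ∂P) = (A 0 * B 0) * γ := by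
      have h1 : (∫ z, z * ((‖F z‖ ^ 2 : ℝ) : ℂ) * h z ∂P)
          = ∫ z, (fun w : ℂ => w) z * ρ z ∂P :=
        integral_congr_ae (Eventually.of_forall fun z => by rw [hρdef]; ring)
      rw [h1, hCONT (fun w : ℂ => w) (continuous_id : Continuous fun w : ℂ => w)]
    have hden : (∫ z, ((‖F z‖ ^ 2 : ℝ) : ℂ) * h z ∂P) = A 0 * B 0 := hcval
    rw [hnum, hden, mul_comm (A 0 * B 0) γ, mul_div_assoc, div_self hcne, mul_one]
  exact ⟨hgoal1, hgoal2, hγΓ, hgoal4⟩
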